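/- Let H be a finite non-abelian group with generating set X, let F_d be the free group of rank d with free generating set Y, and let M = max{ l_X(h) : h ∈ H } be the maximal word length of an element of H with respect to X. Then there exists c ∈ H (possibly c = 1) such that every element of the restricted regular wreath product F_d ≀ H is a product of at most M·(d·|H| + 1) + 1 palindromes with respect to the generating set consisting of the canonical copies of X ∪ {c} and of Y; that is, pw(F_d ≀ H, X ∪ {c} ∪ Y) ≤ M·(d·|H| + 1) + 1. -/

import Mathlib

open Function

section WreathDefs

variable (G A : Type*) [Group G] [Group A]

/-- The subgroup of finitely supported functions `A → G` (pointwise operations). -/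
def restrictedBase : Subgroup (A → G) where
  carrier := {f | (Function.mulSupport f).Finite}
  one_mem' := by simp [Function.mulSupport_one]
  mul_mem' := fun hf hg => (hf.union hg).subset (Function.mulSupport_mul _ _)
  inv_mem' := fun hf => by simpa [Function.mulSupport_inv] using hf

variable {G A}

lemma shift_mem (a : A) (f : restrictedBase G A) :
    (fun x => (f : A → G) (a * x)) ∈ restrictedBase G A := by
  have h : Function.mulSupport (fun x => (f : A → G) (a * x)) =
      (fun x : A => a * x) ⁻¹' Function.mulSupport (f : A → G) :=
    Function.mulSupport_comp_eq_preimage _ _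
  show (Function.mulSupport _).Finite
  rw [h]
  exact f.2.preimage (mul_right_injective a).injOn

/-- The translation automorphism of the restricted base, `(a • f) x = f (a⁻¹ * x)`. -/
noncomputable def shiftEquiv (a : A) : restrictedBase G A ≃* restrictedBase G A where
  toFun f := ⟨fun x => (f : A → G) (a⁻¹ * x), shift_mem a⁻¹ f⟩
  invFun f := ⟨fun x => (f : A → G) (a * x), shift_mem a f⟩
  left_inv f := by ext x; simp
  right_inv f := by ext x; simp
  map_mul' f g := by ext x; simp

variable (G A)

/-- The translation action of `A` on finitely supported functions `A → G`. -/
noncomputable def wreathAction : A →* MulAut (restrictedBase G A) where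
  toFun a := shiftEquiv a
  map_one' := by ext f x; simp [shiftEquiv]
  map_mul' a b := by ext f x; simp [shiftEquiv, mul_assoc]

/-- The restricted regular wreath product `G ≀ A`. -/
noncomputable abbrev Wreath := restrictedBase G A ⋊[wreathAction G A] A

variable {G A}

/-- The finitely supported function equal to `g` at `1` and trivial elsewhere. -/
noncomputable def atOne (g : G) : restrictedBase G A :=
  letI := Classical.decEq A
  ⟨fun x => if x = 1 then g else 1, by
    apply Set.Finite.subset (Set.finite_singleton (1 : A))
    intro x hx
    simp only [Function.mem_mulSupport] at hx
    by_contra hx1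
    exact hx (if_neg (by simpa using hx1))⟩

/-- The natural generating set of `G ≀ A` built from generating sets of the factors. -/
noncomputable def wreathGens (XB : Set G) (XA : Set A) : Set (Wreath G A) :=
  ((fun g => SemidirectProduct.inl (atOne g)) '' XB) ∪ (SemidirectProduct.inr '' XA)

end WreathDefs

section Palindromes

variable {W : Type*} [Group W]

/-- `g` is a palindrome with respect to `S`: it is the product of a word over `S`
(entries in `S ∪ S⁻¹`) which reads the same forwards and backwards. -/
def IsPalindrome (S : Set W) (g : W) : Prop :=
  ∃ l : List W, (∀ x ∈ l, x ∈ S ∪ S⁻¹) ∧ l.reverse = l ∧ l.prod = g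

/-- `g` is a product of at most `n` palindromes with respect to `S`. -/
def ProdOfPal (S : Set W) (n : ℕ) (g : W) : Prop :=
  ∃ l : List W, l.length ≤ n ∧ (∀ p ∈ l, IsPalindrome S p) ∧ l.prod = g

/-- The palindromic width of a group with respect to `S` (`⊤` if infinite). -/
noncomputable def palWidth (S : Set W) : ℕ∞ :=
  sInf {n : ℕ∞ | ∃ m : ℕ, n = (m : ℕ∞) ∧ ∀ g : W, ProdOfPal S m g}

/-- The word length of `g` with respect to `S`. -/
noncomputable def wordLength (S : Set W) (g : W) : ℕ :=
  sInf {n : ℕ | ∃ l : List W, l.length = n ∧ (∀ x ∈ l, x ∈ S ∪ S⁻¹) ∧ l.prod = g}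

end Palindromes
set_option linter.unusedSectionVars false
section Aux

variable {G A : Type*} [Group G] [Group A]

lemma restrictedBase.coe_mul (f g : restrictedBase G A) (x : A) :
    ((f * g : restrictedBase G A) : A → G) x = (f : A → G) x * (g : A → G) x := rfl

lemma restrictedBase.coe_inv (f : restrictedBase G A) (x : A) :
    ((f⁻¹ : restrictedBase G A) : A → G) x = ((f : A → G) x)⁻¹ := rfl

lemma restrictedBase.coe_one (x : A) : ((1 : restrictedBase G A) : A → G) x = 1 := rfl

lemma restrictedBase.ext' {f g : restrictedBase G A}
    (h : ∀ x, (f : A → G) x = (g : A → G) x) : f = g :=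
  Subtype.ext (funext h)

lemma atOne_apply_one (g : G) : ((atOne g : restrictedBase G A) : A → G) 1 = g := by
  simp [atOne]

lemma atOne_apply_ne (g : G) {x : A} (h : x ≠ 1) :
    ((atOne g : restrictedBase G A) : A → G) x = 1 := by
  simp [atOne, h]

/-- `atOne` as a homomorphism. -/
noncomputable def atOneHom : G →* restrictedBase G A where
  toFun := atOne
  map_one' := restrictedBase.ext' fun x => by
    by_cases h : x = (1 : A) <;>
      simp [h, atOne_apply_one, atOne_apply_ne, restrictedBase.coe_one]
  map_mul' g₁ g₂ := restrictedBase.ext' fun x => by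
    by_cases h : x = (1 : A) <;>
      simp [h, atOne_apply_one, atOne_apply_ne, restrictedBase.coe_mul]

lemma shift_apply (a : A) (f : restrictedBase G A) (x : A) :
    ((wreathAction G A a f : restrictedBase G A) : A → G) x = (f : A → G) (a⁻¹ * x) := rfl

/-- The function supported at `t` with value `g` there. -/
noncomputable def base1 (t : A) (g : G) : restrictedBase G A :=
  wreathAction G A t (atOne g)

lemma base1_apply_self (t : A) (g : G) :
    ((base1 t g : restrictedBase G A) : A → G) t = g := by
  rw [base1, shift_apply, inv_mul_cancel, atOne_apply_one]

lemma base1_apply_ne (t : A) (g : G) {x : A} (h : x ≠ t) :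
    ((base1 t g : restrictedBase G A) : A → G) x = 1 := by
  rw [base1, shift_apply]
  apply atOne_apply_ne
  simp only [ne_eq, inv_mul_eq_one]
  exact fun hc => h hc.symm

noncomputable def base1Hom (t : A) : G →* restrictedBase G A :=
  (wreathAction G A t).toMonoidHom.comp atOneHom

lemma base1Hom_apply (t : A) (g : G) : base1Hom t g = base1 t g := rfl

lemma base1_one (g : G) : (base1 1 g : restrictedBase G A) = atOne g := by
  rw [base1, map_one]; rfl

lemma base1_shift (α t : A) (g : G) :
    wreathAction G A α (base1 t g) = base1 (α * t) g := by
  rw [base1, base1, map_mul]; rfl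

lemma base1_commute {t s : A} (h : t ≠ s) (g g' : G) :
    Commute (base1 t g : restrictedBase G A) (base1 s g') := by
  apply restrictedBase.ext'
  intro x
  rw [restrictedBase.coe_mul, restrictedBase.coe_mul]
  by_cases hx : x = t
  · rw [hx, base1_apply_ne s g' h, mul_one, one_mul]
  · rw [base1_apply_ne t g hx, mul_one, one_mul]

/-- Decomposition of an element of the base into pointwise contributions. -/
lemma prod_base1 (ts : List A) (hnd : ts.Nodup) (f : restrictedBase G A)
    (hf : ∀ x, x ∉ ts → (f : A → G) x = 1) :
    (ts.map (fun t => base1 t ((f : A → G) t))).prod = f := by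
  induction ts generalizing f with
  | nil =>
      simp only [List.map_nil, List.prod_nil]
      exact (restrictedBase.ext' fun x => (hf x (by simp)).symm)
  | cons t ts ih =>
      have hnd' : ts.Nodup := (List.nodup_cons.mp hnd).2
      have htts : t ∉ ts := (List.nodup_cons.mp hnd).1
      set f' : restrictedBase G A := (base1 t ((f : A → G) t))⁻¹ * f with hf'
      have hco : ∀ s, s ≠ t → (f' : A → G) s = (f : A → G) s := by
        intro s hs
        rw [hf', restrictedBase.coe_mul, restrictedBase.coe_inv,
          base1_apply_ne t _ hs, inv_one, one_mul]
      have h1 : (ts.map (fun s => base1 s ((f' : A → G) s))).prod = f' := by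
        apply ih hnd'
        intro x hx
        by_cases hxt : x = t
        · rw [hxt, hf', restrictedBase.coe_mul, restrictedBase.coe_inv,
            base1_apply_self, inv_mul_cancel]
        · rw [hco x hxt]
          exact hf x (by simp [hxt, hx])
      have h2 : ts.map (fun s => base1 s ((f' : A → G) s))
          = ts.map (fun s => base1 s ((f : A → G) s)) := by
        apply List.map_congr_left
        intro s hs
        rw [hco s (by rintro rfl; exact htts hs)]
      rw [List.map_cons, List.prod_cons, ← h2, h1, hf', mul_inv_cancel_left]

end Aux
section Pairs

variable {K : Type*} [Group K]

/-- Generators `(s, s⁻¹)`. -/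
def pairSet (S : Set K) : Set (K × K) := (fun s => (s, s⁻¹)) '' S

/-- The subgroup of `K × K` generated by pairs `(s, s⁻¹)` for generators `s`. -/
def pairGroup (S : Set K) : Subgroup (K × K) := Subgroup.closure (pairSet S)

lemma pair_mem_of_gen {S : Set K} {s : K} (hs : s ∈ S) : (s, s⁻¹) ∈ pairGroup S :=
  Subgroup.subset_closure ⟨s, hs, rfl⟩

lemma inv_mem_symmSet {S : Set K} {x : K} (h : x ∈ S ∪ S⁻¹) : x⁻¹ ∈ S ∪ S⁻¹ := by
  rcases h with h | h
  · exact Or.inr (by simpa using h)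
  · exact Or.inl (by simpa using h)

lemma goodWord_of_mem {S : Set K} {z : K × K} (h : z ∈ pairGroup S) :
    ∃ l : List K, (∀ x ∈ l, x ∈ S ∪ S⁻¹) ∧ l.prod = z.1 ∧
      (l.map (fun x => x⁻¹)).prod = z.2 := by
  induction h using Subgroup.closure_induction with
  | mem z hz =>
      obtain ⟨s, hs, rfl⟩ := hz
      exact ⟨[s], by simpa using Or.inl hs, by simp, by simp⟩
  | one => exact ⟨[], by simp, by simp, by simp⟩
  | mul z w _ _ hz hw =>
      obtain ⟨lz, hz1, hz2, hz3⟩ := hz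
      obtain ⟨lw, hw1, hw2, hw3⟩ := hw
      refine ⟨lz ++ lw, ?_, ?_, ?_⟩
      · intro x hx; rcases List.mem_append.mp hx with h | h
        · exact hz1 x h
        · exact hw1 x h
      · rw [List.prod_append, hz2, hw2]; rfl
      · rw [List.map_append, List.prod_append, hz3, hw3]; rfl
  | inv z _ hz =>
      obtain ⟨l, h1, h2, h3⟩ := hz
      have hmapmap : (l.map (fun x : K => x⁻¹)).map (fun x : K => x⁻¹) = l := by
        rw [List.map_map]
        simpa using List.map_id l
      refine ⟨(l.map (fun x => x⁻¹)).reverse, ?_, ?_, ?_⟩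
      · intro x hx
        rw [List.mem_reverse, List.mem_map] at hx
        obtain ⟨y, hy, rfl⟩ := hx
        exact inv_mem_symmSet (h1 y hy)
      · rw [← List.prod_inv_reverse, h2]; rfl
      · rw [List.map_reverse, hmapmap]
        have : l.reverse.prod = ((l.map fun x : K => x⁻¹).prod)⁻¹ := by
          rw [List.prod_inv_reverse, hmapmap]
        rw [this, h3]; rfl

lemma swap_mem_pairGroup {S : Set K} {z : K × K} (h : z ∈ pairGroup S) :
    (z.2, z.1) ∈ pairGroup S := by
  induction h using Subgroup.closure_induction with
  | mem z hz =>
      obtain ⟨s, hs, rfl⟩ := hz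
      have : ((s⁻¹ : K), s) = ((s, s⁻¹) : K × K)⁻¹ := by simp
      rw [this]
      exact inv_mem (pair_mem_of_gen hs)
  | one => exact one_mem _
  | mul z w _ _ hz hw => exact mul_mem hz hw
  | inv z _ hz => simpa using inv_mem hz

/-- Vertical elements: if there is no endomorphism inverting all generators, then
`pairGroup` contains a nontrivial vertical element. -/
lemma exists_vertical {S : Set K} (hgen : Subgroup.closure S = ⊤)
    (hno : ¬∃ ψ : K →* K, ∀ x ∈ S, ψ x = x⁻¹) :
    ∃ ℓ : K, ℓ ≠ 1 ∧ ((1 : K), ℓ) ∈ pairGroup S := by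
  by_contra hcon
  push_neg at hcon
  have hvert : ∀ ℓ : K, ((1 : K), ℓ) ∈ pairGroup S → ℓ = 1 := by
    intro ℓ hℓ
    by_contra hne
    exact (hcon ℓ hne) hℓ
  have huniq : ∀ h b b' : K, (h, b) ∈ pairGroup S → (h, b') ∈ pairGroup S → b = b' := by
    intro h b b' hb hb'
    have hm : ((1 : K), b⁻¹ * b') ∈ pairGroup S := by
      have := mul_mem (inv_mem hb) hb'
      simpa using this
    have := hvert _ hm
    rw [inv_mul_eq_one] at this
    exact this
  have hsurj : ∀ h : K, ∃ b, (h, b) ∈ pairGroup S := by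
    let T : Subgroup K :=
      { carrier := {h | ∃ b, (h, b) ∈ pairGroup S}
        one_mem' := ⟨1, one_mem _⟩
        mul_mem' := by
          rintro a a' ⟨b, hb⟩ ⟨b', hb'⟩
          exact ⟨b * b', by simpa using mul_mem hb hb'⟩
        inv_mem' := by
          rintro a ⟨b, hb⟩
          exact ⟨b⁻¹, by simpa using inv_mem hb⟩ }
    have hle : (⊤ : Subgroup K) ≤ T := by
      rw [← hgen]
      exact (Subgroup.closure_le T).mpr (fun s hs => ⟨s⁻¹, pair_mem_of_gen hs⟩)
    exact fun h => hle (Subgroup.mem_top h)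
  choose f hf using hsurj
  refine hno ⟨{ toFun := f, map_one' := ?_, map_mul' := ?_ }, ?_⟩
  · exact huniq 1 _ _ (hf 1) (one_mem _)
  · intro a a'
    exact huniq (a * a') _ _ (hf (a * a')) (by simpa using mul_mem (hf a) (hf a'))
  · intro x hx
    exact huniq x _ _ (hf x) (pair_mem_of_gen hx)
end Pairs

section PairSurj

variable {K : Type*} [Group K]

lemma pair_fst_surj {S : Set K} (hgen : Subgroup.closure S = ⊤) (h : K) :
    ∃ b, (h, b) ∈ pairGroup S := by
  let T : Subgroup K :=
    { carrier := {h | ∃ b, (h, b) ∈ pairGroup S}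
      one_mem' := ⟨1, one_mem _⟩
      mul_mem' := by
        rintro a a' ⟨b, hb⟩ ⟨b', hb'⟩
        exact ⟨b * b', by simpa using mul_mem hb hb'⟩
      inv_mem' := by
        rintro a ⟨b, hb⟩
        exact ⟨b⁻¹, by simpa using inv_mem hb⟩ }
  have hle : (⊤ : Subgroup K) ≤ T := by
    rw [← hgen]
    exact (Subgroup.closure_le T).mpr (fun s hs => ⟨s⁻¹, pair_mem_of_gen hs⟩)
  exact hle (Subgroup.mem_top h)

lemma pair_snd_surj {S : Set K} (hgen : Subgroup.closure S = ⊤) (t : K) :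
    ∃ a, (a, t) ∈ pairGroup S := by
  obtain ⟨b, hb⟩ := pair_fst_surj hgen t
  exact ⟨b, by simpa using swap_mem_pairGroup hb⟩

end PairSurj
section Cchoice

variable {K : Type*} [Group K]

lemma exists_good_c {X : Set K} (hX : Subgroup.closure X = ⊤)
    (hna : ∃ a b : K, a * b ≠ b * a) :
    ∃ c : K, ¬∃ ψ : K →* K, ∀ x ∈ X ∪ {c}, ψ x = x⁻¹ := by
  by_contra hcon
  push_neg at hcon
  choose ψ hψ using hcon
  have hagree : ∀ c, ψ c = ψ 1 := by
    intro c
    apply MonoidHom.eq_of_eqOn_dense hX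
    intro x hx
    have h1 := hψ c x (Set.mem_union_left _ hx)
    have h2 := hψ 1 x (Set.mem_union_left _ hx)
    simp only [h1, h2]
  have hinv : ∀ c : K, ψ 1 c = c⁻¹ := by
    intro c
    have := hψ c c (Set.mem_union_right _ (Set.mem_singleton c))
    rw [← hagree c]
    exact this
  obtain ⟨a, b, hab⟩ := hna
  apply hab
  have h1 : (a * b)⁻¹ = a⁻¹ * b⁻¹ := by
    rw [← hinv, map_mul, hinv, hinv]
  have h2 : b⁻¹ * a⁻¹ = a⁻¹ * b⁻¹ := by rw [← mul_inv_rev, h1]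
  calc a * b = (b⁻¹ * a⁻¹)⁻¹ := by simp
    _ = (a⁻¹ * b⁻¹)⁻¹ := by rw [h2]
    _ = b * a := by simp

lemma exists_word_of_closure {X : Set K} (hX : Subgroup.closure X = ⊤) (h : K) :
    ∃ l : List K, (∀ x ∈ l, x ∈ X ∪ X⁻¹) ∧ l.prod = h := by
  have hh : h ∈ Subgroup.closure X := hX ▸ Subgroup.mem_top h
  have hh' : h ∈ Submonoid.closure (X ∪ X⁻¹) := by
    rw [← Subgroup.closure_toSubmonoid]
    exact hh
  exact Submonoid.exists_list_of_mem_closure hh'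

end Cchoice
section MainAux

open SemidirectProduct

variable {G A : Type*} [Group G] [Group A]

lemma atOne_mul (g g' : G) :
    (atOne (g * g') : restrictedBase G A) = atOne g * atOne g' :=
  map_mul (atOneHom : G →* restrictedBase G A) g g'

lemma atOne_inv (g : G) : (atOne g⁻¹ : restrictedBase G A) = (atOne g)⁻¹ :=
  map_inv (atOneHom : G →* restrictedBase G A) g

lemma atOne_one : (atOne 1 : restrictedBase G A) = 1 :=
  map_one (atOneHom : G →* restrictedBase G A)

lemma atOne_pow (g : G) (n : ℕ) :
    ((atOne g : restrictedBase G A)) ^ n = atOne (g ^ n) :=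
  (map_pow (atOneHom : G →* restrictedBase G A) g n).symm

end MainAux

section WreathPairs

open SemidirectProduct

variable {H : Type*} [Group H] {d : ℕ} {XA : Set H}

/-- The generator-inverting endomorphism of the free group. -/
noncomputable def sigmaF (d : ℕ) : FreeGroup (Fin d) →* FreeGroup (Fin d) :=
  FreeGroup.lift (fun i => (FreeGroup.of i)⁻¹)

lemma sigmaF_of (i : Fin d) : sigmaF d (FreeGroup.of i) = (FreeGroup.of i)⁻¹ := by
  simp [sigmaF]

lemma sigmaF_sigmaF (u : FreeGroup (Fin d)) : sigmaF d (sigmaF d u) = u := by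
  have h : (sigmaF d).comp (sigmaF d) = MonoidHom.id (FreeGroup (Fin d)) :=
    FreeGroup.ext_hom _ _ (fun i => by simp [sigmaF])
  have := DFunLike.congr_fun h u
  simpa using this

lemma mem_S_y (i : Fin d) :
    (inl (atOne (FreeGroup.of i)) : Wreath (FreeGroup (Fin d)) H) ∈
      wreathGens (Set.range (FreeGroup.of : Fin d → FreeGroup (Fin d))) XA :=
  Set.mem_union_left _ ⟨FreeGroup.of i, ⟨i, rfl⟩, rfl⟩

lemma mem_S_x {x : H} (hx : x ∈ XA) :
    (inr x : Wreath (FreeGroup (Fin d)) H) ∈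
      wreathGens (Set.range (FreeGroup.of : Fin d → FreeGroup (Fin d))) XA :=
  Set.mem_union_right _ ⟨x, hx, rfl⟩

lemma ypair_mem (u : FreeGroup (Fin d)) :
    ((inl (atOne u) : Wreath (FreeGroup (Fin d)) H),
      (inl (atOne (sigmaF d u)) : Wreath (FreeGroup (Fin d)) H)) ∈
      pairGroup (wreathGens (Set.range (FreeGroup.of : Fin d → FreeGroup (Fin d))) XA) := by
  have hu : u ∈ Subgroup.closure (Set.range (FreeGroup.of : Fin d → FreeGroup (Fin d))) := by
    rw [FreeGroup.closure_range_of]; trivial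
  induction hu using Subgroup.closure_induction with
  | mem x hx =>
      obtain ⟨i, rfl⟩ := hx
      have : ((inl (atOne (FreeGroup.of i)) : Wreath (FreeGroup (Fin d)) H),
          (inl (atOne (sigmaF d (FreeGroup.of i))) : Wreath (FreeGroup (Fin d)) H))
          = ((inl (atOne (FreeGroup.of i)) : Wreath (FreeGroup (Fin d)) H),
             (inl (atOne (FreeGroup.of i)) : Wreath (FreeGroup (Fin d)) H)⁻¹) := by
        rw [sigmaF_of, atOne_inv, map_inv]
      rw [this]
      exact pair_mem_of_gen (mem_S_y i)
  | one =>
      have : ((inl (atOne (1 : FreeGroup (Fin d))) : Wreath (FreeGroup (Fin d)) H),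
          (inl (atOne (sigmaF d 1)) : Wreath (FreeGroup (Fin d)) H)) = 1 := by
        simp only [map_one, atOne_one]
        rfl
      rw [this]; exact one_mem _
  | mul x y _ _ hx hy =>
      have : ((inl (atOne (x * y)) : Wreath (FreeGroup (Fin d)) H),
          (inl (atOne (sigmaF d (x * y))) : Wreath (FreeGroup (Fin d)) H))
          = ((inl (atOne x) : Wreath (FreeGroup (Fin d)) H), inl (atOne (sigmaF d x)))
            * ((inl (atOne y) : Wreath (FreeGroup (Fin d)) H), inl (atOne (sigmaF d y))) := by
        rw [Prod.mk_mul_mk, map_mul, atOne_mul, map_mul, atOne_mul, map_mul]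
      rw [this]; exact mul_mem hx hy
  | inv x _ hx =>
      have : ((inl (atOne x⁻¹) : Wreath (FreeGroup (Fin d)) H),
          (inl (atOne (sigmaF d x⁻¹)) : Wreath (FreeGroup (Fin d)) H))
          = ((inl (atOne x) : Wreath (FreeGroup (Fin d)) H), inl (atOne (sigmaF d x)))⁻¹ := by
        rw [Prod.inv_mk, map_inv, atOne_inv, map_inv, atOne_inv, map_inv]
      rw [this]; exact inv_mem hx

lemma hpair_mem {p : H × H} (hp : p ∈ pairGroup XA) :
    ((inr p.1 : Wreath (FreeGroup (Fin d)) H), (inr p.2 : Wreath (FreeGroup (Fin d)) H)) ∈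
      pairGroup (wreathGens (Set.range (FreeGroup.of : Fin d → FreeGroup (Fin d))) XA) := by
  induction hp using Subgroup.closure_induction with
  | mem z hz =>
      obtain ⟨x, hx, rfl⟩ := hz
      have : ((inr x : Wreath (FreeGroup (Fin d)) H), (inr x⁻¹ : Wreath (FreeGroup (Fin d)) H))
          = ((inr x : Wreath (FreeGroup (Fin d)) H), (inr x : Wreath (FreeGroup (Fin d)) H)⁻¹) := by
        rw [map_inv]
      rw [this]
      exact pair_mem_of_gen (mem_S_x hx)
  | one =>
      show ((inr (1 : H) : Wreath (FreeGroup (Fin d)) H),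
          (inr (1 : H) : Wreath (FreeGroup (Fin d)) H)) ∈ _
      have : ((inr (1 : H) : Wreath (FreeGroup (Fin d)) H),
          (inr (1 : H) : Wreath (FreeGroup (Fin d)) H))
          = (1 : Wreath (FreeGroup (Fin d)) H × Wreath (FreeGroup (Fin d)) H) := by
        rw [map_one]
        rfl
      rw [this]; exact one_mem _
  | mul x y _ _ hx hy =>
      have : ((inr (x * y).1 : Wreath (FreeGroup (Fin d)) H), (inr (x * y).2 : Wreath (FreeGroup (Fin d)) H))
          = ((inr x.1 : Wreath (FreeGroup (Fin d)) H), (inr x.2 : Wreath (FreeGroup (Fin d)) H))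
            * ((inr y.1 : Wreath (FreeGroup (Fin d)) H), (inr y.2 : Wreath (FreeGroup (Fin d)) H)) := by
        rw [Prod.mk_mul_mk]
        exact Prod.ext (by simp [Prod.fst_mul, map_mul]) (by simp [Prod.snd_mul, map_mul])
      rw [this]; exact mul_mem hx hy
  | inv x _ hx =>
      have : ((inr (x⁻¹).1 : Wreath (FreeGroup (Fin d)) H), (inr (x⁻¹).2 : Wreath (FreeGroup (Fin d)) H))
          = ((inr x.1 : Wreath (FreeGroup (Fin d)) H), (inr x.2 : Wreath (FreeGroup (Fin d)) H))⁻¹ := by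
        rw [Prod.inv_mk]
        exact Prod.ext (by simp [map_inv]) (by simp [map_inv])
      rw [this]; exact inv_mem hx

end WreathPairs
section Gadget

open SemidirectProduct
open scoped commutatorElement

variable {H : Type*} [Group H] {d : ℕ} {XA : Set H}

local notation "W" => Wreath (FreeGroup (Fin d)) H
local notation "SS" => wreathGens (Set.range (FreeGroup.of : Fin d → FreeGroup (Fin d))) XA

lemma gadget {ℓ : H} (hℓ : ℓ ≠ 1)
    (hvert : (((1 : W), (inr ℓ : W))) ∈ pairGroup SS)
    {b' t : H} (hbt : ((b', t) : H × H) ∈ pairGroup XA)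
    (u v : FreeGroup (Fin d)) :
    (((1 : W), (inl (base1 t ⁅u, v⁆) : W))) ∈ pairGroup SS := by
  have hη : (((inr ℓ : W), (1 : W))) ∈ pairGroup SS := by
    simpa using swap_mem_pairGroup hvert
  have hA : ∀ w : FreeGroup (Fin d),
      (((inl (atOne (sigmaF d w)) : W), (inl (atOne w) : W))) ∈ pairGroup SS := by
    intro w
    have h := ypair_mem (XA := XA) (sigmaF d w)
    rwa [sigmaF_sigmaF] at h
  -- the conjugated pair
  have hP : ∀ w : FreeGroup (Fin d),
      (((inl (base1 ℓ (sigmaF d w)) : W), (inl (atOne w) : W))) ∈ pairGroup SS := by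
    intro w
    have hm := mul_mem (mul_mem hη (hA w)) (inv_mem hη)
    have he : (((inr ℓ : W), (1 : W)) * ((inl (atOne (sigmaF d w)) : W), (inl (atOne w) : W))
          * (((inr ℓ : W), (1 : W)))⁻¹)
        = (((inl (base1 ℓ (sigmaF d w)) : W), (inl (atOne w) : W))) := by
      rw [Prod.inv_mk, Prod.mk_mul_mk, Prod.mk_mul_mk]
      refine Prod.ext ?_ ?_
      · show (inr ℓ : W) * inl (atOne (sigmaF d w)) * (inr ℓ)⁻¹ = inl (base1 ℓ (sigmaF d w))
        rw [base1, inl_aut, map_inv]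
      · show (1 : W) * inl (atOne w) * (1 : W)⁻¹ = inl (atOne w)
        rw [one_mul, inv_one, mul_one]
    rwa [he] at hm
  -- commutator
  have hκ := mul_mem (mul_mem (mul_mem (hP u) (hA v)) (inv_mem (hP u))) (inv_mem (hA v))
  have hcomm : Commute (inl (base1 ℓ (sigmaF d u)) : W) (inl (atOne (sigmaF d v))) := by
    have h0 : Commute (base1 ℓ (sigmaF d u))
        (atOne (sigmaF d v) : restrictedBase (FreeGroup (Fin d)) H) := by
      rw [← base1_one]
      exact base1_commute hℓ _ _
    exact h0.map inl
  have hc1 : (inl (base1 ℓ (sigmaF d u)) : W) * inl (atOne (sigmaF d v))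
      * (inl (base1 ℓ (sigmaF d u)))⁻¹ * (inl (atOne (sigmaF d v)))⁻¹ = 1 := by
    rw [hcomm.eq, mul_inv_cancel_right, mul_inv_cancel]
  have hc2 : (inl (atOne u) : W) * inl (atOne v) * (inl (atOne u))⁻¹ * (inl (atOne v))⁻¹
      = inl (atOne ⁅u, v⁆) := by
    rw [commutatorElement_def, atOne_mul, atOne_mul, atOne_mul, atOne_inv, atOne_inv,
      map_mul, map_mul, map_mul, map_inv, map_inv]
  have he2 : (((inl (base1 ℓ (sigmaF d u)) : W), (inl (atOne u) : W))
        * ((inl (atOne (sigmaF d v)) : W), (inl (atOne v) : W))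
        * (((inl (base1 ℓ (sigmaF d u)) : W), (inl (atOne u) : W)))⁻¹
        * (((inl (atOne (sigmaF d v)) : W), (inl (atOne v) : W)))⁻¹)
      = (((1 : W), (inl (atOne ⁅u, v⁆) : W))) := by
    rw [Prod.inv_mk, Prod.inv_mk, Prod.mk_mul_mk, Prod.mk_mul_mk, Prod.mk_mul_mk]
    exact Prod.ext hc1 hc2
  rw [he2] at hκ
  have hω := hpair_mem (d := d) hbt
  have hm2 := mul_mem (mul_mem hω hκ) (inv_mem hω)
  have he3 : (((inr b' : W), (inr t : W)) * ((1 : W), (inl (atOne ⁅u, v⁆) : W))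
        * (((inr b' : W), (inr t : W)))⁻¹)
      = (((1 : W), (inl (base1 t ⁅u, v⁆) : W))) := by
    rw [Prod.inv_mk, Prod.mk_mul_mk, Prod.mk_mul_mk]
    refine Prod.ext ?_ ?_
    · show (inr b' : W) * 1 * (inr b')⁻¹ = 1
      rw [mul_one, mul_inv_cancel]
    · show (inr t : W) * inl (atOne ⁅u, v⁆) * (inr t)⁻¹ = inl (base1 t ⁅u, v⁆)
      rw [base1, inl_aut, map_inv]
  rwa [he3] at hm2

end Gadget
section BaseDecomp

open SemidirectProduct
open scoped commutatorElement

variable {H : Type*} [Group H] [Fintype H] {d : ℕ} {XA : Set H}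

local notation "W" => Wreath (FreeGroup (Fin d)) H
local notation "SS" => wreathGens (Set.range (FreeGroup.of : Fin d → FreeGroup (Fin d))) XA

lemma vertical_single (hgen : Subgroup.closure XA = ⊤) {ℓ : H} (hℓ : ℓ ≠ 1)
    (hvert : (((1 : W), (inr ℓ : W))) ∈ pairGroup SS)
    (t : H) {g : FreeGroup (Fin d)} (hg : g ∈ commutator (FreeGroup (Fin d))) :
    (((1 : W), (inl (base1 t g) : W))) ∈ pairGroup SS := by
  obtain ⟨b', hbt⟩ := pair_snd_surj hgen t
  let ι : FreeGroup (Fin d) →* W × W :=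
    MonoidHom.prod 1 (inl.comp (base1Hom t))
  have hle : commutator (FreeGroup (Fin d)) ≤ (pairGroup SS).comap ι := by
    rw [commutator_def, Subgroup.commutator_le]
    intro u _ v _
    show ι ⁅u, v⁆ ∈ pairGroup SS
    have he : ι ⁅u, v⁆ = (((1 : W), (inl (base1 t ⁅u, v⁆) : W))) := rfl
    rw [he]
    exact gadget hℓ hvert hbt u v
  exact hle hg

lemma vertical_base (hgen : Subgroup.closure XA = ⊤) {ℓ : H} (hℓ : ℓ ≠ 1)
    (hvert : (((1 : W), (inr ℓ : W))) ∈ pairGroup SS)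
    (β : restrictedBase (FreeGroup (Fin d)) H)
    (hβ : ∀ x : H, (β : H → FreeGroup (Fin d)) x ∈ commutator (FreeGroup (Fin d))) :
    (((1 : W), (inl β : W))) ∈ pairGroup SS := by
  have hdec := prod_base1 (Finset.univ.toList (α := H)) (Finset.nodup_toList _) β
    (fun x hx => absurd (Finset.mem_toList.mpr (Finset.mem_univ x)) hx)
  let θ : restrictedBase (FreeGroup (Fin d)) H →* W × W := MonoidHom.prod 1 inl
  show θ β ∈ pairGroup SS
  rw [← hdec, map_list_prod]
  apply Subgroup.list_prod_mem
  intro x hx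
  rw [List.map_map, List.mem_map] at hx
  obtain ⟨t, _, rfl⟩ := hx
  exact vertical_single hgen hℓ hvert t (hβ t)

lemma wreath_fst_surj (hgen : Subgroup.closure XA = ⊤) (g : W) :
    ∃ b, ((g, b)) ∈ pairGroup SS := by
  let T : Subgroup W :=
    { carrier := {g | ∃ b, ((g, b)) ∈ pairGroup SS}
      one_mem' := ⟨1, one_mem _⟩
      mul_mem' := by
        rintro a a' ⟨b, hb⟩ ⟨b', hb'⟩
        exact ⟨b * b', by simpa using mul_mem hb hb'⟩
      inv_mem' := by
        rintro a ⟨b, hb⟩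
        exact ⟨b⁻¹, by simpa using inv_mem hb⟩ }
  have hinr : ∀ h : H, (inr h : W) ∈ T := by
    intro h
    obtain ⟨b, hb⟩ := pair_fst_surj hgen h
    exact ⟨inr b, hpair_mem (d := d) hb⟩
  have hbase : ∀ (t : H) (v : FreeGroup (Fin d)), (inl (base1 t v) : W) ∈ T := by
    intro t v
    obtain ⟨b, hb⟩ := pair_fst_surj hgen t
    have h1 := hpair_mem (d := d) hb
    have h2 := ypair_mem (XA := XA) v
    have hm := mul_mem (mul_mem h1 h2) (inv_mem h1)
    refine ⟨(inr b : W) * inl (atOne (sigmaF d v)) * (inr b)⁻¹, ?_⟩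
    have he : ((inr t : W), (inr b : W)) * ((inl (atOne v) : W), (inl (atOne (sigmaF d v)) : W))
          * (((inr t : W), (inr b : W)))⁻¹
        = ((inl (base1 t v) : W), (inr b : W) * inl (atOne (sigmaF d v)) * (inr b)⁻¹) := by
      rw [Prod.inv_mk, Prod.mk_mul_mk, Prod.mk_mul_mk]
      refine Prod.ext ?_ rfl
      show (inr t : W) * inl (atOne v) * (inr t)⁻¹ = inl (base1 t v)
      rw [base1, inl_aut, map_inv]
    rwa [he] at hm
  have hinl : ∀ f : restrictedBase (FreeGroup (Fin d)) H, (inl f : W) ∈ T := by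
    intro f
    have hdec := prod_base1 (Finset.univ.toList (α := H)) (Finset.nodup_toList _) f
      (fun x hx => absurd (Finset.mem_toList.mpr (Finset.mem_univ x)) hx)
    rw [← hdec, map_list_prod]
    apply Subgroup.list_prod_mem
    intro x hx
    rw [List.map_map, List.mem_map] at hx
    obtain ⟨t, _, rfl⟩ := hx
    exact hbase t _
  have hg : g ∈ T := by
    rw [← inl_left_mul_inr_right g]
    exact mul_mem (hinl g.left) (hinr g.right)
  exact hg

end BaseDecomp
section PowerPart

variable {d : ℕ}

/-- The exponent-sum homomorphism for the `i`-th generator. -/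
noncomputable def expHom (d : ℕ) (i : Fin d) : FreeGroup (Fin d) →* Multiplicative ℤ :=
  FreeGroup.lift (fun j => Multiplicative.ofAdd (if j = i then (1 : ℤ) else 0))

/-- The canonical "power word" with the same abelianization as `v`. -/
noncomputable def powElt (d : ℕ) (v : FreeGroup (Fin d)) : FreeGroup (Fin d) :=
  ((List.finRange d).map
    (fun i => FreeGroup.of i ^ (Multiplicative.toAdd (expHom d i v)))).prod

lemma powElt_diff_mem (v : FreeGroup (Fin d)) :
    (powElt d v)⁻¹ * v ∈ commutator (FreeGroup (Fin d)) := by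
  classical
  have key : Abelianization.of (powElt d v) = Abelianization.of v := by
    let Θ : FreeGroup (Fin d) →* Abelianization (FreeGroup (Fin d)) :=
      ∏ i : Fin d, (zpowersHom _ (Abelianization.of (FreeGroup.of i))).comp (expHom d i)
    have hΘ : ∀ w, Θ w = ∏ i : Fin d,
        (Abelianization.of (FreeGroup.of i)) ^ (Multiplicative.toAdd (expHom d i w)) := by
      intro w
      rw [show Θ w = (∏ i : Fin d,
          (zpowersHom _ (Abelianization.of (FreeGroup.of i))).comp (expHom d i)) w from rfl]
      rw [MonoidHom.finset_prod_apply]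
      rfl
    have h1 : Θ = Abelianization.of := by
      apply FreeGroup.ext_hom
      intro j
      rw [hΘ]
      rw [Finset.prod_eq_single j]
      · have : expHom d j (FreeGroup.of j) = Multiplicative.ofAdd (1 : ℤ) := by
          simp [expHom]
        rw [this]
        simp
      · intro i _ hij
        have : expHom d i (FreeGroup.of j) = Multiplicative.ofAdd (0 : ℤ) := by
          simp [expHom, Ne.symm hij]
        rw [this]
        simp
      · intro hj
        exact absurd (Finset.mem_univ j) hj
    have h2 : Abelianization.of (powElt d v) = Θ v := by
      rw [hΘ, powElt, map_list_prod, List.map_map, Fin.prod_univ_def]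
      apply congrArg
      apply List.map_congr_left
      intro i _
      show Abelianization.of (FreeGroup.of i ^ (Multiplicative.toAdd (expHom d i v))) = _
      rw [map_zpow]
    rw [h2, h1]
  have h3 : Abelianization.of ((powElt d v)⁻¹ * v) = 1 := by
    rw [map_mul, map_inv, key, inv_mul_cancel]
  exact (QuotientGroup.eq_one_iff _).mp h3

lemma powElt_one : powElt d (1 : FreeGroup (Fin d)) = 1 := by
  rw [powElt]
  rw [List.prod_eq_one]
  intro x hx
  rw [List.mem_map] at hx
  obtain ⟨i, _, rfl⟩ := hx
  rw [map_one]
  norm_num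

end PowerPart
section PalGeneric

variable {K : Type*} [Group K]

lemma map_inv_map_inv (l : List K) :
    ((l.map (fun x : K => x⁻¹)).map (fun x : K => x⁻¹)) = l := by
  rw [List.map_map]
  simpa using List.map_id l

lemma reverse_prod_eq (l : List K) :
    l.reverse.prod = ((l.map fun x : K => x⁻¹).prod)⁻¹ := by
  rw [List.prod_inv_reverse, map_inv_map_inv]

lemma isPalindrome_of_pair {S : Set K} {a b : K} (h : ((a, b)) ∈ pairGroup S) :
    IsPalindrome S (a * b⁻¹) := by
  obtain ⟨l, h1, h2, h3⟩ := goodWord_of_mem h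
  refine ⟨l ++ l.reverse, ?_, ?_, ?_⟩
  · intro x hx
    rcases List.mem_append.mp hx with hx | hx
    · exact h1 x hx
    · exact h1 x (List.mem_reverse.mp hx)
  · rw [List.reverse_append, List.reverse_reverse]
  · rw [List.prod_append, h2]
    have h4 : l.reverse.prod = b⁻¹ := by
      rw [reverse_prod_eq]
      simp only at h3
      rw [h3]
    rw [h4]

lemma isPalindrome_single {S : Set K} {s : K} (hs : s ∈ S ∪ S⁻¹) : IsPalindrome S s :=
  ⟨[s], by simpa using hs, rfl, by simp⟩

end PalGeneric
section InrInl

open SemidirectProduct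

variable {G A : Type*} [Group G] [Group A]

lemma inr_mul_inl (a : A) (n : restrictedBase G A) :
    (inr a : Wreath G A) * inl n = inl (wreathAction G A a n) * inr a := by
  rw [inl_aut, map_inv]
  group

end InrInl

section PowPal

open SemidirectProduct

variable {H : Type*} [Group H] {d : ℕ} {X XA : Set H}

local notation "W" => Wreath (FreeGroup (Fin d)) H
local notation "SS" => wreathGens (Set.range (FreeGroup.of : Fin d → FreeGroup (Fin d))) XA

lemma inr_letter_mem (hXA : X ⊆ XA) {x : H} (hx : x ∈ X ∪ X⁻¹) :
    (inr x : W) ∈ SS ∪ SS⁻¹ := by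
  rcases hx with hx | hx
  · exact Or.inl (mem_S_x (hXA hx))
  · refine Or.inr ?_
    rw [Set.mem_inv, ← map_inv]
    exact mem_S_x (hXA (by rwa [← Set.mem_inv]))

lemma y_letter_mem (i : Fin d) :
    (inl (atOne (FreeGroup.of i)) : W) ∈ SS ∪ SS⁻¹ :=
  Or.inl (mem_S_y i)

lemma y_letter_inv_mem (i : Fin d) :
    ((inl (atOne (FreeGroup.of i)) : W))⁻¹ ∈ SS ∪ SS⁻¹ := by
  refine Or.inr ?_
  rw [Set.mem_inv, inv_inv]
  exact mem_S_y i

lemma pow_pal (hXA : X ⊆ XA) {a : H} {lw : List H}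
    (hlw : ∀ x ∈ lw, x ∈ X ∪ X⁻¹) (hprod : lw.prod = a) (i : Fin d) (e : ℤ) :
    ∃ b : H, IsPalindrome SS
      ((inl (base1 a (FreeGroup.of i ^ e)) : W) * inr (a * b)) := by
  classical
  set letter : W := if 0 ≤ e then inl (atOne (FreeGroup.of i))
    else (inl (atOne (FreeGroup.of i)))⁻¹ with hletter
  set U : List W := lw.map (fun x => (inr x : W)) with hU
  set R : List W := List.replicate e.natAbs letter with hR
  refine ⟨lw.reverse.prod, ⟨U ++ (R ++ U.reverse), ?_, ?_, ?_⟩⟩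
  · intro x hx
    rcases List.mem_append.mp hx with hx | hx
    · rw [hU, List.mem_map] at hx
      obtain ⟨y, hy, rfl⟩ := hx
      exact inr_letter_mem hXA (hlw y hy)
    · rcases List.mem_append.mp hx with hx | hx
      · rw [hR] at hx
        have := List.eq_of_mem_replicate hx
        rw [this, hletter]
        split
        · exact y_letter_mem i
        · exact y_letter_inv_mem i
      · rw [List.mem_reverse, hU, List.mem_map] at hx
        obtain ⟨y, hy, rfl⟩ := hx
        exact inr_letter_mem hXA (hlw y hy)
  · rw [List.reverse_append, List.reverse_append, List.reverse_reverse]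
    rw [show R.reverse = R by rw [hR, List.reverse_replicate]]
    rw [List.append_assoc]
  · rw [List.prod_append, List.prod_append]
    have hUprod : U.prod = inr a := by
      rw [hU, ← map_list_prod, hprod]
    have hUrev : U.reverse.prod = inr lw.reverse.prod := by
      rw [hU, ← List.map_reverse, ← map_list_prod]
    have hRprod : R.prod = (inl (atOne (FreeGroup.of i ^ e)) : W) := by
      rw [hR, List.prod_replicate, hletter]
      rcases le_or_gt 0 e with he | he
      · rw [if_pos he]
        have h1 : (FreeGroup.of i : FreeGroup (Fin d)) ^ e = FreeGroup.of i ^ e.natAbs := by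
          rw [← zpow_natCast, Int.natAbs_of_nonneg he]
        rw [h1, ← map_pow, atOne_pow]
      · rw [if_neg (not_le.mpr he)]
        have h2 : ((e.natAbs : ℤ)) = -e := by omega
        have h1 : (FreeGroup.of i : FreeGroup (Fin d)) ^ e
            = ((FreeGroup.of i) ^ ((e.natAbs : ℤ)))⁻¹ := by
          rw [h2, zpow_neg, inv_inv]
        rw [h1, zpow_natCast, inv_pow, ← map_pow, atOne_pow, ← map_inv, ← atOne_inv]
    rw [hUprod, hUrev, hRprod]
    rw [← mul_assoc, inr_mul_inl]
    rw [show wreathAction (FreeGroup (Fin d)) H a (atOne (FreeGroup.of i ^ e))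
        = base1 a (FreeGroup.of i ^ e) from rfl]
    rw [mul_assoc, ← map_mul]

/-- Chain of power palindromes along a list of (coordinate, generator, exponent) triples. -/
lemma pow_chain (hXA : X ⊆ XA) (hX : Subgroup.closure X = ⊤) :
    ∀ (L : List (H × Fin d × ℤ)) (α : H),
    ∃ (pals : List W) (h' : H),
      pals.length = L.length ∧
      (∀ p ∈ pals, IsPalindrome SS p) ∧
      (inr α : W) * pals.prod
        = inl ((L.map (fun q => base1 q.1 (FreeGroup.of q.2.1 ^ q.2.2))).prod)
            * inr (α * h') := by
  intro L
  induction L with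
  | nil =>
      intro α
      refine ⟨[], 1, rfl, by simp, ?_⟩
      simp only [List.prod_nil, List.map_nil, mul_one, map_one, one_mul]
  | cons q L ih =>
      intro α
      obtain ⟨t, i, e⟩ := q
      obtain ⟨lw, hlw, hprod⟩ := exists_word_of_closure hX (α⁻¹ * t)
      obtain ⟨b, hpal⟩ := pow_pal (XA := XA) hXA hlw hprod i e
      obtain ⟨pals', h'', hlen', hpals', hprod'⟩ := ih (t * b)
      refine ⟨(inl (base1 (α⁻¹ * t) (FreeGroup.of i ^ e)) * inr ((α⁻¹ * t) * b)) :: pals',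
        α⁻¹ * (t * b * h''), by simp [hlen'], ?_, ?_⟩
      · intro p hp
        rcases List.mem_cons.mp hp with hp | hp
        · rw [hp]; exact hpal
        · exact hpals' p hp
      · rw [List.prod_cons, List.map_cons, List.prod_cons]
        have hstep : (inr α : W) * (inl (base1 (α⁻¹ * t) (FreeGroup.of i ^ e))
              * inr ((α⁻¹ * t) * b))
            = inl (base1 t (FreeGroup.of i ^ e)) * inr (t * b) := by
          rw [← mul_assoc, inr_mul_inl, base1_shift, mul_inv_cancel_left,
            mul_assoc, ← map_mul]
          rw [show α * (α⁻¹ * t * b) = t * b by group]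
        rw [← mul_assoc, hstep, mul_assoc, hprod', ← mul_assoc, ← map_mul]
        rw [show α * (α⁻¹ * (t * b * h'')) = t * b * h'' by group]

/-- Combine the chains over all coordinates. -/
lemma pow_chain_outer (hXA : X ⊆ XA) (hX : Subgroup.closure X = ⊤)
    (E : H → Fin d → ℤ) :
    ∀ (ts : List H) (α : H),
    ∃ (pals : List W) (h' : H),
      pals.length = ts.length * d ∧
      (∀ p ∈ pals, IsPalindrome SS p) ∧
      (inr α : W) * pals.prod
        = inl ((ts.map (fun t => base1 t
            (((List.finRange d).map (fun i => FreeGroup.of i ^ E t i)).prod))).prod)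
            * inr (α * h') := by
  intro ts
  induction ts with
  | nil =>
      intro α
      refine ⟨[], 1, by simp, by simp, ?_⟩
      simp only [List.prod_nil, List.map_nil, mul_one, map_one, one_mul]
  | cons t ts ih =>
      intro α
      obtain ⟨pals₁, h₁, hlen₁, hpals₁, hprod₁⟩ :=
        pow_chain (XA := XA) hXA hX ((List.finRange d).map (fun i => (t, i, E t i))) α
      obtain ⟨pals₂, h₂, hlen₂, hpals₂, hprod₂⟩ := ih (α * h₁)
      have hFL : ((List.finRange d).map (fun i => (t, i, E t i))).map
            (fun q => base1 q.1 (FreeGroup.of q.2.1 ^ q.2.2))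
          = (List.finRange d).map (fun i => base1 t (FreeGroup.of i ^ E t i)) := by
        rw [List.map_map]
        rfl
      have hbase : ((List.finRange d).map (fun i => base1 t (FreeGroup.of i ^ E t i))).prod
          = base1 t (((List.finRange d).map (fun i => FreeGroup.of i ^ E t i)).prod) := by
        rw [← base1Hom_apply, map_list_prod, List.map_map]
        rfl
      refine ⟨pals₁ ++ pals₂, h₁ * h₂, ?_, ?_, ?_⟩
      · rw [List.length_append, hlen₁, hlen₂, List.length_map, List.length_finRange,
          List.length_cons]
        ring
      · intro p hp
        rcases List.mem_append.mp hp with hp | hp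
        · exact hpals₁ p hp
        · exact hpals₂ p hp
      · rw [List.prod_append, ← mul_assoc, hprod₁, hFL, hbase, List.map_cons, List.prod_cons,
          mul_assoc, hprod₂, show α * h₁ * h₂ = α * (h₁ * h₂) by group, ← mul_assoc, ← map_mul]

end PowPal
section WordLen

variable {K : Type*} [Group K]

lemma wordLength_word {X : Set K} (hX : Subgroup.closure X = ⊤) (h : K) :
    ∃ l : List K, (∀ x ∈ l, x ∈ X ∪ X⁻¹) ∧ l.prod = h ∧ l.length = wordLength X h := by
  obtain ⟨l0, h1, h2⟩ := exists_word_of_closure hX h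
  have hne : {n : ℕ | ∃ l : List K,
      l.length = n ∧ (∀ x ∈ l, x ∈ X ∪ X⁻¹) ∧ l.prod = h}.Nonempty :=
    ⟨l0.length, l0, rfl, h1, h2⟩
  obtain ⟨l, hlen, hmem, hprod⟩ := Nat.sInf_mem hne
  exact ⟨l, hmem, hprod, hlen⟩

end WordLen

/-- Let `H` be a finite non-abelian group generated by `X`, with
`M = max { l_X(h) : h ∈ H }`, and `F_d` the free group of rank `d`. Then there is `c ∈ H`
(possibly `c = 1`) such that every element of `F_d ≀ H` is a product of at most
`M·(d·|H| + 1) + 1` palindromes with respect to the canonical copies of `X ∪ {c}` and of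
the free generating set of `F_d`. -/
theorem free_wreath_finite_palindromic_width {H : Type*} [Group H] [Fintype H]
    (X : Finset H) (hX : Subgroup.closure (X : Set H) = ⊤)
    (hna : ∃ a b : H, a * b ≠ b * a)
    (d : ℕ) (M : ℕ) (hM : M = Finset.univ.sup fun h : H => wordLength (X : Set H) h) :
    ∃ c : H, ∀ g : Wreath (FreeGroup (Fin d)) H,
      ProdOfPal
        (wreathGens (Set.range (FreeGroup.of : Fin d → FreeGroup (Fin d)))
          ((X : Set H) ∪ {c}))
        (M * (d * Fintype.card H + 1) + 1) g := by
  classical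
  obtain ⟨c, hc⟩ := exists_good_c hX hna
  refine ⟨c, ?_⟩
  intro g
  set Xc : Set H := (X : Set H) ∪ {c} with hXc
  have hXsub : (X : Set H) ⊆ Xc := Set.subset_union_left
  have hgenA : Subgroup.closure Xc = ⊤ := by
    rw [eq_top_iff, ← hX]
    exact Subgroup.closure_mono hXsub
  -- M ≥ 1
  have hM1 : 1 ≤ M := by
    obtain ⟨a, b, hab⟩ := hna
    have hbne : b ≠ 1 := by rintro rfl; simp at hab
    have hwb : 1 ≤ wordLength (X : Set H) b := by
      by_contra hlt
      push_neg at hlt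
      obtain ⟨l, hmem, hprod, hlen⟩ := wordLength_word hX b
      have hl0 : l.length = 0 := by omega
      have : l = [] := List.length_eq_zero_iff.mp hl0
      rw [this] at hprod
      exact hbne (by simpa using hprod.symm)
    calc 1 ≤ wordLength (X : Set H) b := hwb
      _ ≤ M := hM ▸ Finset.le_sup (Finset.mem_univ b)
  -- vertical element
  obtain ⟨ℓ, hℓ, hvpairH⟩ := exists_vertical hgenA hc
  have hvert : (((1 : Wreath (FreeGroup (Fin d)) H),
      (SemidirectProduct.inr ℓ : Wreath (FreeGroup (Fin d)) H))) ∈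
      pairGroup (wreathGens (Set.range (FreeGroup.of : Fin d → FreeGroup (Fin d))) Xc) := by
    have h0 := hpair_mem (d := d) hvpairH
    rwa [show (SemidirectProduct.inr (1 : H) : Wreath (FreeGroup (Fin d)) H) = 1
      from map_one _] at h0
  obtain ⟨b₀, hb₀⟩ := wreath_fst_surj (XA := Xc) hgenA g
  set fb := b₀.left with hfb
  set hb := b₀.right with hhb
  set fpow : restrictedBase (FreeGroup (Fin d)) H :=
    ⟨fun t => powElt d ((fb : H → FreeGroup (Fin d)) t), Set.toFinite _⟩ with hfpow
  set q : Wreath (FreeGroup (Fin d)) H :=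
    SemidirectProduct.inl fpow * SemidirectProduct.inr hb with hq
  have hdiff : q * b₀⁻¹ = SemidirectProduct.inl (fpow * fb⁻¹) := by
    rw [hq, ← SemidirectProduct.inl_left_mul_inr_right b₀, map_mul, map_inv]
    rw [← hhb, ← hfb]
    group
  have hcoords : ∀ x : H,
      ((fpow * fb⁻¹ : restrictedBase (FreeGroup (Fin d)) H) : H → FreeGroup (Fin d)) x
        ∈ commutator (FreeGroup (Fin d)) := by
    intro x
    rw [restrictedBase.coe_mul, restrictedBase.coe_inv]
    set v := (fb : H → FreeGroup (Fin d)) x with hv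
    have h1 := powElt_diff_mem (d := d) v
    have h3 := (inferInstance : (commutator (FreeGroup (Fin d))).Normal).conj_mem _ h1 v
    have he : ((fpow : H → FreeGroup (Fin d)) x) * v⁻¹
        = (v * ((powElt d v)⁻¹ * v) * v⁻¹)⁻¹ := by
      show powElt d v * v⁻¹ = _
      group
    rw [he]
    exact inv_mem h3
  have hvb := vertical_base (XA := Xc) hgenA hℓ hvert (fpow * fb⁻¹) hcoords
  rw [← hdiff] at hvb
  have hgq : ((g, q)) ∈ pairGroup
      (wreathGens (Set.range (FreeGroup.of : Fin d → FreeGroup (Fin d))) Xc) := by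
    have hm := mul_mem hvb hb₀
    have he : (((1 : Wreath (FreeGroup (Fin d)) H), q * b₀⁻¹)) * ((g, b₀)) = ((g, q)) := by
      rw [Prod.mk_mul_mk, one_mul, inv_mul_cancel_right]
    rwa [he] at hm
  have hpal1 := isPalindrome_of_pair hgq
  -- power palindromes
  obtain ⟨palsPow, h', hlenPow, hpalsPow, hprodPow⟩ :=
    pow_chain_outer (XA := Xc) hXsub hX
      (fun t i => Multiplicative.toAdd (expHom d i ((fb : H → FreeGroup (Fin d)) t)))
      (Finset.univ.toList) 1
  have hFL : ((Finset.univ.toList (α := H)).map (fun t => base1 t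
      (((List.finRange d).map (fun i => FreeGroup.of i ^
        (Multiplicative.toAdd (expHom d i ((fb : H → FreeGroup (Fin d)) t))))).prod))).prod
      = fpow := by
    have h0 := prod_base1 (Finset.univ.toList (α := H)) (Finset.nodup_toList _) fpow
      (fun x hx => absurd (Finset.mem_toList.mpr (Finset.mem_univ x)) hx)
    exact h0
  have hprodPow' : palsPow.prod
      = SemidirectProduct.inl fpow * SemidirectProduct.inr h' := by
    rw [show (SemidirectProduct.inr (1 : H) : Wreath (FreeGroup (Fin d)) H) = 1
      from map_one _, one_mul, one_mul] at hprodPow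
    rw [hprodPow, hFL]
  -- letter palindromes
  obtain ⟨lw, hlw, hlwprod, hlwlen⟩ := wordLength_word hX (h'⁻¹ * hb)
  set palsL : List (Wreath (FreeGroup (Fin d)) H) :=
    lw.map (fun x => SemidirectProduct.inr x) with hpalsL
  refine ⟨(g * q⁻¹) :: (palsPow ++ palsL), ?_, ?_, ?_⟩
  · rw [List.length_cons, List.length_append, hlenPow, hpalsL, List.length_map]
    have e1 : (Finset.univ.toList (α := H)).length = Fintype.card H := by
      rw [Finset.length_toList, Finset.card_univ]
    have e2 : (Finset.univ.toList (α := H)).length * d = d * Fintype.card H := by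
      rw [e1, Nat.mul_comm]
    have hlwM : lw.length ≤ M := by
      rw [hlwlen]
      exact hM ▸ Finset.le_sup (Finset.mem_univ _)
    have hle : d * Fintype.card H ≤ M * (d * Fintype.card H) :=
      Nat.le_mul_of_pos_left _ hM1
    have hexp : M * (d * Fintype.card H + 1) = M * (d * Fintype.card H) + M := by ring
    have hcomm : Fintype.card H * d = d * Fintype.card H := Nat.mul_comm _ _
    omega
  · intro p hp
    rcases List.mem_cons.mp hp with hp | hp
    · rw [hp]; exact hpal1
    rcases List.mem_append.mp hp with hp | hp
    · exact hpalsPow p hp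
    · rw [hpalsL, List.mem_map] at hp
      obtain ⟨x, hx, rfl⟩ := hp
      exact isPalindrome_single (inr_letter_mem hXsub (hlw x hx))
  · rw [List.prod_cons, List.prod_append, hprodPow']
    have hL : palsL.prod = SemidirectProduct.inr (h'⁻¹ * hb) := by
      rw [hpalsL, ← map_list_prod, hlwprod]
    rw [hL, hq]
    rw [mul_assoc (SemidirectProduct.inl fpow) (SemidirectProduct.inr h'), ← map_mul,
      show h' * (h'⁻¹ * hb) = hb by group]
    group
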